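/- Let G be a finite group and let R be a commutative ring whose additive group is torsion-free (i.e. n·r = 0 with n a positive integer implies r = 0). Then the total ghost map φ : W_G(R) → Π'_{U ≤ G} R, sending x to the family (φ_U(x))'_{U ≤ G} indexed by conjugacy classes of subgroups U of G, is injective. -/

import Mathlib

open MulAction Pointwise
open scoped Classical

/-- The set of conjugacy classes of subgroups of `G`: the quotient of the set of
subgroups of `G` by the conjugation action of `G`. -/
abbrev SubgroupConjClasses (G : Type*) [Group G] :=
  MulAction.orbitRel.Quotient (ConjAct G) (Subgroup G)

/-- `U` is subconjugate to `V`: `U ≤ gVg⁻¹` for some `g ∈ G`. -/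
def Subconj {G : Type*} [Group G] (U V : Subgroup G) : Prop :=
  ∃ g : ConjAct G, U ≤ g • V

/-- The ghost map `φ_U : W_G(R) → R`,
`φ_U(x) = Σ'_{U ⪯ V ≤ G} |(G/V)^U| · x_V^{(V:U)}`, with exactly one summand for
each conjugacy class of subgroups `V` of `G` to which `U` is subconjugate. -/
noncomputable def ghost {G : Type*} [Group G] [Fintype G] {R : Type*} [CommRing R]
    (U : Subgroup G) (x : SubgroupConjClasses G → R) : R :=
  ∑ᶠ C : SubgroupConjClasses G,
    if Subconj U (Quotient.out C) then
      (Nat.card (MulAction.fixedPoints U (G ⧸ (Quotient.out C : Subgroup G))) : R) *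
        x C ^ (Nat.card (Quotient.out C : Subgroup G) / Nat.card U)
    else 0

section Aux
variable {G : Type*} [Group G] [Fintype G]

lemma card_smul_subgroup (g : ConjAct G) (V : Subgroup G) :
    Nat.card (g • V : Subgroup G) = Nat.card V :=
  (Nat.card_congr (Subgroup.equivSMul g V).toEquiv).symm

lemma subconj_card_le {U V : Subgroup G} (h : Subconj U V) : Nat.card U ≤ Nat.card V := by
  obtain ⟨g, hg⟩ := h
  have := Subgroup.card_le_of_le hg
  rwa [card_smul_subgroup] at this

lemma subconj_mk_eq {U V : Subgroup G} (h : Subconj U V)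
    (hcard : Nat.card V ≤ Nat.card U) :
    (Quotient.mk'' U : SubgroupConjClasses G) = Quotient.mk'' V := by
  obtain ⟨g, hg⟩ := h
  have : U = g • V := by
    apply Subgroup.eq_of_le_of_card_ge hg
    rwa [card_smul_subgroup]
  exact Quotient.sound ⟨g, this.symm⟩

lemma subconj_refl (U : Subgroup G) : Subconj U U := ⟨1, by simp⟩

lemma fixed_card_pos (U : Subgroup G) :
    0 < Nat.card (MulAction.fixedPoints U (G ⧸ U)) := by
  have : (QuotientGroup.mk (1 : G) : G ⧸ U) ∈ MulAction.fixedPoints U (G ⧸ U) := by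
    intro u
    show ((u : G) • (QuotientGroup.mk (1 : G) : G ⧸ U)) = QuotientGroup.mk (1 : G)
    rw [MulAction.Quotient.smul_mk]
    exact QuotientGroup.eq.mpr (by simpa using u.2)
  exact Nat.card_pos_iff.mpr ⟨⟨_, this⟩, Set.toFinite _⟩

end Aux

/-- If the additive group of the commutative ring `R` is torsion-free, then the total
ghost map `φ : W_G(R) → Π'_{U ≤ G} R`, sending a Witt vector `x` to the family
`(φ_U(x))'_{U ≤ G}` indexed by the conjugacy classes of subgroups `U` of `G`, is
injective. -/

theorem ghost_map_injective (G : Type u) [Group G] [Fintype G]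
    (R : Type v) [CommRing R]
    (htf : ∀ (n : ℕ) (r : R), 0 < n → n • r = 0 → r = 0) :
    Function.Injective
      (fun (x : SubgroupConjClasses G → R) (C : SubgroupConjClasses G) =>
        ghost (Quotient.out C) x) := by
  intro x y h
  have hg : ∀ C : SubgroupConjClasses G, ghost (Quotient.out C) x = ghost (Quotient.out C) y :=
    fun C => congrFun h C
  funext C
  -- strong downward induction on card of out C
  suffices key : ∀ k : ℕ, ∀ C : SubgroupConjClasses G,
      Fintype.card G - Nat.card (Quotient.out C : Subgroup G) < k → x C = y C by
    exact key (Fintype.card G + 1) C (by omega)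
  intro k
  induction k with
  | zero => omega
  | succ k ih =>
    intro C hC
    set U : Subgroup G := Quotient.out C with hU
    have hUcard : Nat.card U ≤ Fintype.card G := by
      rw [← Nat.card_eq_fintype_card]; exact Subgroup.card_le_card_group U
    have hterm : ∀ D : SubgroupConjClasses G, D ≠ C →
        (if Subconj U (Quotient.out D) then
          (Nat.card (MulAction.fixedPoints U (G ⧸ (Quotient.out D : Subgroup G))) : R) *
            x D ^ (Nat.card (Quotient.out D : Subgroup G) / Nat.card U) else 0)
        = (if Subconj U (Quotient.out D) then
          (Nat.card (MulAction.fixedPoints U (G ⧸ (Quotient.out D : Subgroup G))) : R) *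
            y D ^ (Nat.card (Quotient.out D : Subgroup G) / Nat.card U) else 0) := by
      intro D hD
      by_cases hs : Subconj U (Quotient.out D)
      · have hlt : Nat.card U < Nat.card (Quotient.out D : Subgroup G) := by
          rcases lt_or_ge (Nat.card U) (Nat.card (Quotient.out D : Subgroup G)) with h'|h'
          · exact h'
          · exfalso
            apply hD
            have := subconj_mk_eq hs h'
            rw [show (Quotient.mk'' U : SubgroupConjClasses G) = C from Quotient.out_eq C,
              show (Quotient.mk'' (Quotient.out D) : SubgroupConjClasses G) = D from
                Quotient.out_eq D] at this
            exact this.symm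
        have hxy : x D = y D := by
          apply ih
          have hDle : Nat.card (Quotient.out D : Subgroup G) ≤ Fintype.card G := by
            rw [← Nat.card_eq_fintype_card]
            exact Subgroup.card_le_card_group _
          omega
        simp [hs, hxy]
      · simp [hs]
    -- now compute ghost difference
    have hsum := hg C
    rw [ghost, ghost, finsum_eq_sum_of_fintype, finsum_eq_sum_of_fintype] at hsum
    rw [Finset.sum_eq_sum_sdiff_singleton_add (Finset.mem_univ C),
        Finset.sum_eq_sum_sdiff_singleton_add (Finset.mem_univ C)] at hsum
    have hrest : ∑ D ∈ Finset.univ \ {C},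
        (if Subconj U (Quotient.out D) then
          (Nat.card (MulAction.fixedPoints U (G ⧸ (Quotient.out D : Subgroup G))) : R) *
            x D ^ (Nat.card (Quotient.out D : Subgroup G) / Nat.card U) else 0)
        = ∑ D ∈ Finset.univ \ {C},
        (if Subconj U (Quotient.out D) then
          (Nat.card (MulAction.fixedPoints U (G ⧸ (Quotient.out D : Subgroup G))) : R) *
            y D ^ (Nat.card (Quotient.out D : Subgroup G) / Nat.card U) else 0) := by
      apply Finset.sum_congr rfl
      intro D hD
      simp only [Finset.mem_sdiff, Finset.mem_singleton] at hD
      exact hterm D hD.2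
    rw [hrest] at hsum
    have hmain :
        (if Subconj U (Quotient.out C) then
          (Nat.card (MulAction.fixedPoints U (G ⧸ (Quotient.out C : Subgroup G))) : R) *
            x C ^ (Nat.card (Quotient.out C : Subgroup G) / Nat.card U) else 0)
        = (if Subconj U (Quotient.out C) then
          (Nat.card (MulAction.fixedPoints U (G ⧸ (Quotient.out C : Subgroup G))) : R) *
            y C ^ (Nat.card (Quotient.out C : Subgroup G) / Nat.card U) else 0) := by
      exact add_left_cancel hsum
    have hself : Subconj U (Quotient.out C) := by rw [← hU]; exact subconj_refl U
    have hcardpos : 0 < Nat.card U := Nat.card_pos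
    have hexp : Nat.card (Quotient.out C : Subgroup G) / Nat.card U = 1 := by
      rw [← hU, Nat.div_self hcardpos]
    rw [hexp] at hmain
    simp only [hself, subconj_refl, if_true, pow_one, ← hU] at hmain
    set m := Nat.card (MulAction.fixedPoints U (G ⧸ U)) with hm
    have hmpos : 0 < m := fixed_card_pos U
    have hz : (m : R) * (x C - y C) = 0 := by rw [mul_sub, hmain, sub_self]
    have := htf m (x C - y C) hmpos (by rw [nsmul_eq_mul]; exact hz)
    exact sub_eq_zero.mp this
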